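/- If 0 < x < (2α/c)·log(1 + c/(2b)) and 0 < β < c, with α > 1, b > 0, c > 0, then α·log(1 + β/(2b)) − xβ/2 > 0. -/

import Mathlib

theorem log_R0_pos (α b c x β : ℝ) (hα : 1 < α) (hb : 0 < b) (hc : 0 < c)
    (hx : 0 < x) (hx' : x < (2 * α / c) * Real.log (1 + c / (2 * b)))
    (hβ : 0 < β) (hβ' : β < c) :
    0 < α * Real.log (1 + β / (2 * b)) - x * β / 2 := by
  have hαpos : 0 < α := lt_trans one_pos hα
  have hkc : 0 < c / (2 * b) := by positivity
  -- strict concavity of log: log(1 + (β/c)·(c/(2b))) > (β/c) log(1 + c/(2b))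
  have hs : (0:ℝ) < β / c := by positivity
  have hs1 : β / c < 1 := (div_lt_one hc).2 hβ'
  have key : (β / c) * Real.log (1 + c / (2 * b)) < Real.log (1 + β / (2 * b)) := by
    have h1 : (1:ℝ) ∈ Set.Ioi (0:ℝ) := by norm_num
    have h2 : (1 + c / (2 * b)) ∈ Set.Ioi (0:ℝ) := by simp; positivity
    have hne : (1:ℝ) ≠ 1 + c / (2 * b) := by nlinarith
    have := strictConcaveOn_log_Ioi.2 h1 h2 hne (by linarith : (0:ℝ) < 1 - β / c) hs
      (by ring)
    have heq : (1 - β / c) • (1:ℝ) + (β / c) • (1 + c / (2 * b)) = 1 + β / (2 * b) := by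
      simp only [smul_eq_mul]
      field_simp
      ring
    rw [heq] at this
    simpa [Real.log_one] using this
  have h2 : x * β / 2 < (2 * α / c) * Real.log (1 + c / (2 * b)) * β / 2 := by
    have := mul_lt_mul_of_pos_right hx' (by positivity : (0:ℝ) < β / 2)
    linarith [this]
  have h3 : (2 * α / c) * Real.log (1 + c / (2 * b)) * β / 2
      = α * ((β / c) * Real.log (1 + c / (2 * b))) := by
    field_simp
  have h4 : α * ((β / c) * Real.log (1 + c / (2 * b))) < α * Real.log (1 + β / (2 * b)) :=
    mul_lt_mul_of_pos_left key hαpos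
  linarith
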